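/- Let a_1,...,a_l ≥ 2 and let c_1,...,c_m ≥ 2 be the Riemenschneider dual string, i.e. [c_1,...,c_m] is the negative continued fraction expansion of p/(p-q) where p/q = [a_1,...,a_l]. Then Σ_{i=1}^{l}(a_i - 2) + 1 = m and Σ_{j=1}^{m}(c_j - 2) + 1 = l. -/

import Mathlib

/-- Value of a negative continued fraction `[a₁, a₂, …, aₗ] = a₁ - 1/(a₂ - 1/(… - 1/aₗ))`. -/
def ncf : List ℚ → ℚ
  | [] => 0
  | a :: l => a - (ncf l)⁻¹

lemma map_cast_eq (L : List ℕ) : (L.map (fun a => (a : ℚ))) = L.map (Nat.cast : ℕ → ℚ) := by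
  induction L with
  | nil => rfl
  | cons a t ih => simpa using ih

lemma ncf_nil : ncf [] = 0 := rfl

lemma ncf_gt_one : ∀ (L : List ℕ), (∀ a ∈ L, 2 ≤ a) → L ≠ [] →
    1 < ncf (L.map (Nat.cast : ℕ → ℚ)) := by
  intro L
  induction L with
  | nil => intro _ h; simp at h
  | cons a t ih =>
    intro hL _
    have ha : 2 ≤ a := hL a List.mem_cons_self
    cases t with
    | nil =>
      simp [ncf]
      exact_mod_cast (by omega : (1:ℕ) < a)
    | cons b t' =>
      have h1 : 1 < ncf ((b :: t').map (Nat.cast : ℕ → ℚ)) :=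
        ih (fun x hx => hL x (List.mem_cons_of_mem _ hx)) (by simp)
      have h2 : (0:ℚ) < (ncf ((b :: t').map (Nat.cast : ℕ → ℚ)))⁻¹ := by positivity
      have h3 : (ncf ((b :: t').map (Nat.cast : ℕ → ℚ)))⁻¹ < 1 := by
        rw [inv_lt_one_iff₀]; right; exact h1
      rw [List.map_cons, ncf]
      have : (2:ℚ) ≤ (a:ℚ) := by exact_mod_cast ha
      linarith

lemma ncf_inj : ∀ (L M : List ℕ), (∀ a ∈ L, 2 ≤ a) → (∀ c ∈ M, 2 ≤ c) →
    ncf (L.map (Nat.cast : ℕ → ℚ)) = ncf (M.map (Nat.cast : ℕ → ℚ)) → L = M := by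
  intro L
  induction L with
  | nil =>
    intro M _ hM h
    cases M with
    | nil => rfl
    | cons c s =>
      exfalso
      have h1 := ncf_gt_one (c :: s) hM (by simp)
      rw [← h] at h1
      simp only [List.map_nil, ncf_nil] at h1
      linarith
  | cons a t ih =>
    intro M hL hM h
    cases M with
    | nil =>
      exfalso
      have h1 := ncf_gt_one (a :: t) hL (by simp)
      rw [h] at h1
      simp only [List.map_nil, ncf_nil] at h1
      linarith
    | cons c s =>
      have ha : 2 ≤ a := hL a List.mem_cons_self
      have hc : 2 ≤ c := hM c List.mem_cons_self
      rw [List.map_cons, List.map_cons, ncf, ncf] at h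
      cases t with
      | nil =>
        cases s with
        | nil =>
          simp [ncf] at h
          have : a = c := by exact_mod_cast h
          rw [this]
        | cons d s' =>
          exfalso
          have h1 : 1 < ncf ((d :: s').map (Nat.cast : ℕ → ℚ)) :=
            ncf_gt_one _ (fun x hx => hM x (List.mem_cons_of_mem _ hx)) (by simp)
          have h2 : (0:ℚ) < (ncf ((d :: s').map (Nat.cast : ℕ → ℚ)))⁻¹ := by positivity
          have h3 : (ncf ((d :: s').map (Nat.cast : ℕ → ℚ)))⁻¹ < 1 := by
            rw [inv_lt_one_iff₀]; right; exact h1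
          simp only [List.map_nil, ncf_nil, inv_zero, sub_zero] at h
          have hac : (a:ℚ) < c ∧ (c:ℚ) < a + 1 := ⟨by linarith, by linarith⟩
          have : a < c ∧ c < a + 1 := ⟨by exact_mod_cast hac.1, by exact_mod_cast hac.2⟩
          omega
      | cons b t' =>
        cases s with
        | nil =>
          exfalso
          have h1 : 1 < ncf ((b :: t').map (Nat.cast : ℕ → ℚ)) :=
            ncf_gt_one _ (fun x hx => hL x (List.mem_cons_of_mem _ hx)) (by simp)
          have h2 : (0:ℚ) < (ncf ((b :: t').map (Nat.cast : ℕ → ℚ)))⁻¹ := by positivity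
          have h3 : (ncf ((b :: t').map (Nat.cast : ℕ → ℚ)))⁻¹ < 1 := by
            rw [inv_lt_one_iff₀]; right; exact h1
          simp only [List.map_nil, ncf_nil, inv_zero, sub_zero] at h
          have hac : (c:ℚ) < a ∧ (a:ℚ) < c + 1 := ⟨by linarith, by linarith⟩
          have : c < a ∧ a < c + 1 := ⟨by exact_mod_cast hac.1, by exact_mod_cast hac.2⟩
          omega
        | cons d s' =>
          have h1 : 1 < ncf ((b :: t').map (Nat.cast : ℕ → ℚ)) :=
            ncf_gt_one _ (fun x hx => hL x (List.mem_cons_of_mem _ hx)) (by simp)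
          have h1' : 1 < ncf ((d :: s').map (Nat.cast : ℕ → ℚ)) :=
            ncf_gt_one _ (fun x hx => hM x (List.mem_cons_of_mem _ hx)) (by simp)
          have h2 : (0:ℚ) < (ncf ((b :: t').map (Nat.cast : ℕ → ℚ)))⁻¹ := by positivity
          have h3 : (ncf ((b :: t').map (Nat.cast : ℕ → ℚ)))⁻¹ < 1 := by
            rw [inv_lt_one_iff₀]; right; exact h1
          have h2' : (0:ℚ) < (ncf ((d :: s').map (Nat.cast : ℕ → ℚ)))⁻¹ := by positivity
          have h3' : (ncf ((d :: s').map (Nat.cast : ℕ → ℚ)))⁻¹ < 1 := by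
            rw [inv_lt_one_iff₀]; right; exact h1'
          have hac : a = c := by
            have hlt : c < a + 1 ∧ a < c + 1 :=
              ⟨by exact_mod_cast (by linarith : (c:ℚ) < a + 1),
               by exact_mod_cast (by linarith : (a:ℚ) < c + 1)⟩
            omega
          subst hac
          have hinv : (ncf ((b :: t').map (Nat.cast : ℕ → ℚ)))⁻¹
              = (ncf ((d :: s').map (Nat.cast : ℕ → ℚ)))⁻¹ := by linarith
          have heq : ncf ((b :: t').map (Nat.cast : ℕ → ℚ))
              = ncf ((d :: s').map (Nat.cast : ℕ → ℚ)) := inv_injective hinv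
          have := ih (d :: s') (fun x hx => hL x (List.mem_cons_of_mem _ hx))
            (fun x hx => hM x (List.mem_cons_of_mem _ hx)) heq
          rw [this]

def dual : List ℕ → List ℕ
  | [] => []
  | [a] => List.replicate (a - 1) 2
  | 0 :: _ :: _ => []
  | 1 :: _ :: _ => []
  | 2 :: b :: L => ((dual (b :: L)).headI + 1) :: (dual (b :: L)).tail
  | (n+3) :: b :: L => 2 :: dual ((n+2) :: b :: L)
termination_by L => L.sum
decreasing_by
  all_goals simp [List.sum_cons]

lemma ncf_replicate : ∀ n : ℕ, ncf (List.replicate n (2:ℚ)) = ((n:ℚ) + 1) / n := by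
  intro n
  induction n with
  | zero => simp [ncf]
  | succ k ih =>
    rw [List.replicate_succ, ncf, ih]
    rcases Nat.eq_zero_or_pos k with hk | hk
    · subst hk; norm_num [ncf]
    · have hk1 : (0:ℚ) < k := by exact_mod_cast hk
      have h2 : ((k:ℚ) + 1) ≠ 0 := by positivity
      have h3 : (k:ℚ) ≠ 0 := ne_of_gt hk1
      push_cast
      rw [inv_div]
      field_simp
      ring

lemma dual_spec : ∀ L : List ℕ, (∀ a ∈ L, 2 ≤ a) → L ≠ [] →
    (dual L ≠ [] ∧ (∀ c ∈ dual L, 2 ≤ c) ∧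
     ncf ((dual L).map (Nat.cast : ℕ → ℚ)) =
       ncf (L.map (Nat.cast : ℕ → ℚ)) / (ncf (L.map (Nat.cast : ℕ → ℚ)) - 1) ∧
     (L.map (fun a => a - 2)).sum + 1 = (dual L).length ∧
     ((dual L).map (fun c => c - 2)).sum + 1 = L.length) := by
  intro L
  induction L using dual.induct with
  | case1 => intro _ h; exact absurd rfl h
  | case2 a =>
    intro hL _
    have ha : 2 ≤ a := hL a (by simp)
    simp only [dual]
    refine ⟨?_, ?_, ?_, ?_, ?_⟩
    · have : 0 < a - 1 := by omega
      exact List.ne_nil_of_length_pos (by simpa using this)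
    · intro c hc
      rw [List.eq_of_mem_replicate hc]
    · rw [List.map_replicate]
      rw [show ((2:ℕ):ℚ) = (2:ℚ) by norm_num]
      rw [ncf_replicate]
      have h1 : ((a - 1 : ℕ) : ℚ) = (a : ℚ) - 1 := by
        push_cast [Nat.cast_sub (by omega : 1 ≤ a)]; ring
      rw [h1]
      simp only [List.map_cons, List.map_nil, ncf, ncf_nil, inv_zero, sub_zero]
      ring_nf
    · simp; omega
    · simp [List.map_replicate]
  | case3 b L =>
    intro hL _
    exact absurd (hL 0 (by simp)) (by omega)
  | case4 b L =>
    intro hL _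
    exact absurd (hL 1 (by simp)) (by omega)
  | case5 b L ih =>
    intro hL _
    have hbl : ∀ x ∈ b :: L, 2 ≤ x := fun x hx => hL x (List.mem_cons_of_mem _ hx)
    obtain ⟨hne, hmem, hval, hs1, hs2⟩ := ih hbl (by simp)
    obtain ⟨c, r, hd⟩ := List.exists_cons_of_ne_nil hne
    have hc2 : 2 ≤ c := hmem c (by rw [hd]; simp)
    have hu1 : 1 < ncf ((b :: L).map (Nat.cast : ℕ → ℚ)) := ncf_gt_one _ hbl (by simp)
    set u := ncf ((b :: L).map (Nat.cast : ℕ → ℚ)) with hu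
    simp only [dual, hd, List.headI, List.tail_cons]
    refine ⟨by simp, ?_, ?_, ?_, ?_⟩
    · intro x hx
      rcases List.mem_cons.mp hx with h | h
      · omega
      · exact hmem x (by rw [hd]; exact List.mem_cons_of_mem _ h)
    · -- value
      rw [hd] at hval
      rw [List.map_cons, ncf] at hval
      have hu0 : u ≠ 0 := by linarith
      have hu1' : u - 1 ≠ 0 := by intro h; apply hu0; linarith [sub_eq_zero.mp h]
      have hv : ncf (((2:ℕ) :: b :: L).map (Nat.cast : ℕ → ℚ)) = 2 - u⁻¹ := by
        rw [List.map_cons, ncf, ← hu]; norm_num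
      rw [hv, List.map_cons, ncf]
      have key : ((((c+1):ℕ)):ℚ) - (ncf (r.map (Nat.cast : ℕ → ℚ)))⁻¹ = 1 + u / (u - 1) := by
        push_cast
        linarith [hval]
      rw [key]
      have hv1 : (2 : ℚ) - u⁻¹ - 1 ≠ 0 := by
        have h4 : u⁻¹ < 1 := by rw [inv_lt_one_iff₀]; right; exact hu1
        intro h; nlinarith [h]
      rw [eq_div_iff hv1]
      have hu1'' : (-1 : ℚ) + u ≠ 0 := by intro h; apply hu1'; linarith
      field_simp
      ring
    · -- first sum
      rw [hd] at hs1
      simp only [List.map_cons, List.sum_cons, List.length_cons] at hs1 ⊢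
      omega
    · -- second sum
      rw [hd] at hs2
      simp only [List.map_cons, List.sum_cons, List.length_cons] at hs2 ⊢
      omega
  | case6 n b L ih =>
    intro hL _
    have hbl : ∀ x ∈ (n+2) :: b :: L, 2 ≤ x := by
      intro x hx
      rcases List.mem_cons.mp hx with h | h
      · omega
      · exact hL x (List.mem_cons_of_mem _ h)
    obtain ⟨hne, hmem, hval, hs1, hs2⟩ := ih hbl (by simp)
    have hu1 : 1 < ncf (((n+2) :: b :: L).map (Nat.cast : ℕ → ℚ)) := ncf_gt_one _ hbl (by simp)
    set u := ncf (((n+2) :: b :: L).map (Nat.cast : ℕ → ℚ)) with hu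
    have hvu : ncf ((n.succ.succ.succ :: b :: L).map (Nat.cast : ℕ → ℚ)) = u + 1 := by
      rw [hu]
      simp only [List.map_cons, ncf]
      push_cast
      ring
    simp only [dual]
    refine ⟨by simp, ?_, ?_, ?_, ?_⟩
    · intro x hx
      rcases List.mem_cons.mp hx with h | h
      · omega
      · exact hmem x h
    · -- value
      rw [hvu]
      simp only [List.map_cons, ncf]
      rw [hval]
      have hu0 : u ≠ 0 := by linarith
      have hu1' : u - 1 ≠ 0 := by intro h; apply hu0; linarith [sub_eq_zero.mp h]
      have hu1'' : (-1 : ℚ) + u ≠ 0 := by intro h; apply hu1'; linarith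
      have hud : u / (u - 1) ≠ 0 := by
        apply div_ne_zero hu0 hu1'
      push_cast
      rw [show u + 1 - 1 = u by ring]
      rw [inv_div]
      field_simp
      ring
    · -- first sum
      simp only [List.map_cons, List.sum_cons, List.length_cons] at hs1 ⊢
      have : n.succ.succ.succ - 2 = (n + 2 - 2) + 1 := by omega
      omega
    · -- second sum
      simp only [List.map_cons, List.sum_cons, List.length_cons] at hs2 ⊢
      omega

/-- If `[a₁,…,a_l]` is the negative continued fraction expansion of `p/q` and
`[c₁,…,c_m]` is the (Riemenschneider dual) expansion of `p/(p-q)`, then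
`Σ(aᵢ-2)+1 = m` and `Σ(cⱼ-2)+1 = l`. -/
theorem stmt1 (p q : ℕ) (hq : 1 ≤ q) (hpq : q < p) (hcop : Nat.Coprime p q)
    (L M : List ℕ)
    (hL2 : ∀ a ∈ L, 2 ≤ a) (hM2 : ∀ c ∈ M, 2 ≤ c)
    (hL : ncf (L.map (fun a => (a : ℚ))) = (p : ℚ) / (q : ℚ))
    (hM : ncf (M.map (fun c => (c : ℚ))) = (p : ℚ) / ((p : ℚ) - (q : ℚ))) :
    (L.map (fun a => a - 2)).sum + 1 = M.length ∧
    (M.map (fun c => c - 2)).sum + 1 = L.length := by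
  rw [map_cast_eq] at hL hM
  have hq0 : (q:ℚ) ≠ 0 := Nat.cast_ne_zero.mpr (by omega)
  have hqq : (0:ℚ) < q := by exact_mod_cast (by omega : 0 < q)
  have hqp : (q:ℚ) < p := by exact_mod_cast hpq
  have hp0 : (0:ℚ) < p := by exact_mod_cast (by omega : 0 < p)
  have hpq0 : (p:ℚ) - q ≠ 0 := sub_ne_zero.mpr (ne_of_gt hqp)
  have hp1 : 1 < (p:ℚ) / q := (one_lt_div hqq).mpr hqp
  have hLne : L ≠ [] := by
    intro h
    subst h
    rw [List.map_nil, ncf_nil] at hL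
    rw [← hL] at hp1
    norm_num at hp1
  obtain ⟨hne, hmem, hval, hs1, hs2⟩ := dual_spec L hL2 hLne
  have hMd : M = dual L := by
    apply ncf_inj M (dual L) hM2 hmem
    rw [hM, hval, hL]
    have hden : (p:ℚ) / q - 1 ≠ 0 := by
      rw [div_sub_one hq0]
      exact div_ne_zero hpq0 hq0
    rw [div_eq_div_iff hpq0 hden]
    field_simp
  subst hMd
  exact ⟨hs1, hs2⟩
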